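/- Let g be holomorphic on the unit disc and define T_g f(z) = ∫₀^z f g' and S_g f(z) = ∫₀^z f' g. Then for every n ∈ ℕ₀ and every holomorphic f on the disc with f(0) = 0, T_g^n S_g f = S_g T_g^n f − n T_g^{n+1} f. -/

import Mathlib

open MeasureTheory Metric

/-- The analytic paraproduct `T_g f (z) = ∫₀^z f(ζ) g'(ζ) dζ`, realized by
integrating along the segment from `0` to `z`. -/
noncomputable def Tg (g f : ℂ → ℂ) : ℂ → ℂ :=
  fun z => z * ∫ t in (0:ℝ)..1, f ((t : ℂ) * z) * deriv g ((t : ℂ) * z)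

/-- The analytic paraproduct `S_g f (z) = ∫₀^z f'(ζ) g(ζ) dζ`, realized by
integrating along the segment from `0` to `z`. -/
noncomputable def Sg (g f : ℂ → ℂ) : ℂ → ℂ :=
  fun z => z * ∫ t in (0:ℝ)..1, deriv f ((t : ℂ) * z) * g ((t : ℂ) * z)

/-- The multiplication operator `M_g f = g f`. -/
def Mg (g f : ℂ → ℂ) : ℂ → ℂ := fun z => g z * f z

/-! ### Auxiliary lemmas -/

lemma mem_seg {z : ℂ} (hz : z ∈ ball (0:ℂ) 1) {t : ℝ} (ht : t ∈ Set.uIcc (0:ℝ) 1) :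
    (t : ℂ) * z ∈ ball (0:ℂ) 1 := by
  rw [Set.uIcc_of_le zero_le_one] at ht
  rw [mem_ball_zero_iff] at hz ⊢
  have h1 : |t| ≤ 1 := abs_le.mpr ⟨by linarith [ht.1], ht.2⟩
  calc ‖(t : ℂ) * z‖ = |t| * ‖z‖ := by
        rw [norm_mul, Complex.norm_real, Real.norm_eq_abs]
    _ ≤ 1 * ‖z‖ := by gcongr
    _ < 1 := by simpa using hz

lemma seg_cont {u : ℂ → ℂ} (hu : ContinuousOn u (ball 0 1)) {z : ℂ}
    (hz : z ∈ ball (0:ℂ) 1) :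
    ContinuousOn (fun t : ℝ => u ((t : ℂ) * z)) (Set.uIcc (0:ℝ) 1) := by
  refine hu.comp ((Complex.continuous_ofReal.mul continuous_const).continuousOn) ?_
  exact fun t ht => mem_seg hz ht

lemma seg_integrable {u v : ℂ → ℂ} (hu : ContinuousOn u (ball 0 1))
    (hv : ContinuousOn v (ball 0 1)) {z : ℂ} (hz : z ∈ ball (0:ℂ) 1) :
    IntervalIntegrable (fun t : ℝ => u ((t : ℂ) * z) * v ((t : ℂ) * z)) volume 0 1 :=
  ((seg_cont hu hz).mul (seg_cont hv hz)).intervalIntegrable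

lemma seg_hasDerivAt {u : ℂ → ℂ} (hu : DifferentiableOn ℂ u (ball 0 1)) {z : ℂ}
    (hz : z ∈ ball (0:ℂ) 1) {t : ℝ} (ht : t ∈ Set.uIcc (0:ℝ) 1) :
    HasDerivAt (fun s : ℝ => u ((s : ℂ) * z)) (deriv u ((t : ℂ) * z) * z) t := by
  have hmem := mem_seg hz ht
  have hd : HasDerivAt u (deriv u ((t : ℂ) * z)) ((t : ℂ) * z) :=
    (hu.differentiableAt (isOpen_ball.mem_nhds hmem)).hasDerivAt
  have hin : HasDerivAt (fun w : ℂ => w * z) z ((t : ℂ)) := by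
    simpa using (hasDerivAt_id ((t : ℂ))).mul_const z
  have := (hd.comp ((t : ℂ)) hin)
  exact (this.comp_ofReal : _)

lemma deriv_cont {u : ℂ → ℂ} (hu : DifferentiableOn ℂ u (ball 0 1)) :
    ContinuousOn (deriv u) (ball (0:ℂ) 1) :=
  ((hu.analyticOnNhd isOpen_ball).deriv).differentiableOn.continuousOn

/-- FTC along the segment: `T_g h + S_g h = g·h − g(0)h(0)` on the ball. -/
lemma key1 {g h : ℂ → ℂ} (hg : DifferentiableOn ℂ g (ball 0 1))
    (hh : DifferentiableOn ℂ h (ball 0 1)) {z : ℂ} (hz : z ∈ ball (0:ℂ) 1) :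
    Tg g h z + Sg g h z = g z * h z - g 0 * h 0 := by
  have hgc := hg.continuousOn
  have hhc := hh.continuousOn
  have hg'c := deriv_cont hg
  have hh'c := deriv_cont hh
  have hψ : ∀ t ∈ Set.uIcc (0:ℝ) 1,
      HasDerivAt (fun s : ℝ => h ((s : ℂ) * z) * g ((s : ℂ) * z))
        ((deriv h ((t : ℂ) * z) * z) * g ((t : ℂ) * z)
          + h ((t : ℂ) * z) * (deriv g ((t : ℂ) * z) * z)) t :=
    fun t ht => (seg_hasDerivAt hh hz ht).mul (seg_hasDerivAt hg hz ht)
  have hint : IntervalIntegrable (fun t : ℝ =>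
      (deriv h ((t : ℂ) * z) * z) * g ((t : ℂ) * z)
        + h ((t : ℂ) * z) * (deriv g ((t : ℂ) * z) * z)) volume 0 1 := by
    apply IntervalIntegrable.add
    · exact (((seg_cont hh'c hz).mul continuousOn_const).mul (seg_cont hgc hz)).intervalIntegrable
    · exact ((seg_cont hhc hz).mul ((seg_cont hg'c hz).mul
        continuousOn_const)).intervalIntegrable
  have hFTC := intervalIntegral.integral_eq_sub_of_hasDerivAt hψ hint
  have hi1 : IntervalIntegrable (fun t : ℝ =>
      h ((t : ℂ) * z) * deriv g ((t : ℂ) * z)) volume 0 1 := seg_integrable hhc hg'c hz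
  have hi2 : IntervalIntegrable (fun t : ℝ =>
      deriv h ((t : ℂ) * z) * g ((t : ℂ) * z)) volume 0 1 := seg_integrable hh'c hgc hz
  have : Tg g h z + Sg g h z
      = ∫ t in (0:ℝ)..1, ((deriv h ((t : ℂ) * z) * z) * g ((t : ℂ) * z)
          + h ((t : ℂ) * z) * (deriv g ((t : ℂ) * z) * z)) := by
    unfold Tg Sg
    rw [← mul_add, ← intervalIntegral.integral_add hi1 hi2, ← intervalIntegral.integral_const_mul]
    apply intervalIntegral.integral_congr
    intro t _
    ring
  rw [this, hFTC]
  simp only [Complex.ofReal_one, Complex.ofReal_zero, one_mul, zero_mul]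
  ring

/-- A primitive along segments of a holomorphic function has the expected derivative. -/
lemma hasDerivAt_prim {H : ℂ → ℂ} (hH : DifferentiableOn ℂ H (ball 0 1))
    {z : ℂ} (hz : z ∈ ball (0:ℂ) 1) :
    HasDerivAt (fun w => w * ∫ t in (0:ℝ)..1, H ((t : ℂ) * w)) (H z) z := by
  have hHc := hH.continuousOn
  have hH'c := deriv_cont hH
  have hz1 : ‖z‖ < 1 := mem_ball_zero_iff.mp hz
  set r : ℝ := (1 + ‖z‖) / 2 with hrdef
  have hr1 : r < 1 := by rw [hrdef]; linarith
  have hzr : ‖z‖ < r := by rw [hrdef]; linarith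
  set ε : ℝ := r - ‖z‖ with hεdef
  have hε : 0 < ε := sub_pos.mpr hzr
  have hK : closedBall (0:ℂ) r ⊆ ball 0 1 := closedBall_subset_ball hr1
  have hmem : ∀ x ∈ ball z ε, ∀ t ∈ Set.uIcc (0:ℝ) 1, (t : ℂ) * x ∈ closedBall (0:ℂ) r := by
    intro x hx t ht
    rw [Set.uIcc_of_le zero_le_one] at ht
    have hxz : ‖x - z‖ < ε := mem_ball_iff_norm.mp hx
    have hxr : ‖x‖ ≤ r := by
      calc ‖x‖ = ‖x - z + z‖ := by ring_nf
        _ ≤ ‖x - z‖ + ‖z‖ := norm_add_le _ _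
        _ ≤ r := by rw [hεdef] at hxz; linarith
    have h1 : |t| ≤ 1 := abs_le.mpr ⟨by linarith [ht.1], ht.2⟩
    rw [mem_closedBall_zero_iff]
    calc ‖(t : ℂ) * x‖ = |t| * ‖x‖ := by rw [norm_mul, Complex.norm_real, Real.norm_eq_abs]
      _ ≤ 1 * r := by
          apply mul_le_mul h1 hxr (norm_nonneg _) zero_le_one
      _ = r := one_mul r
  obtain ⟨C, hC⟩ := (isCompact_closedBall (0:ℂ) r).exists_bound_of_continuousOn (hH'c.mono hK)
  have hcontx : ∀ x ∈ ball z ε, ContinuousOn (fun t : ℝ => H ((t : ℂ) * x)) (Set.uIcc (0:ℝ) 1) := by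
    intro x hx
    refine hHc.comp ((Complex.continuous_ofReal.mul continuous_const).continuousOn) ?_
    exact fun t ht => hK (hmem x hx t ht)
  have hzε : z ∈ ball z ε := mem_ball_self hε
  have hF_meas : ∀ᶠ x in nhds z, AEStronglyMeasurable (fun t : ℝ => H ((t : ℂ) * x))
      (volume.restrict (Set.uIoc (0:ℝ) 1)) := by
    filter_upwards [ball_mem_nhds z hε] with x hx
    exact ((hcontx x hx).mono (Set.uIoc_subset_uIcc (α := ℝ))).aestronglyMeasurable
      measurableSet_uIoc
  have hF_int : IntervalIntegrable (fun t : ℝ => H ((t : ℂ) * z)) volume 0 1 :=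
    (hcontx z hzε).intervalIntegrable
  have hF'_meas : AEStronglyMeasurable (fun t : ℝ => deriv H ((t : ℂ) * z) * (t : ℂ))
      (volume.restrict (Set.uIoc (0:ℝ) 1)) := by
    have : ContinuousOn (fun t : ℝ => deriv H ((t : ℂ) * z) * (t : ℂ))
        (Set.uIcc (0:ℝ) 1) :=
      (seg_cont hH'c hz).mul Complex.continuous_ofReal.continuousOn
    exact (this.mono (Set.uIoc_subset_uIcc (α := ℝ))).aestronglyMeasurable measurableSet_uIoc
  have h_bound : ∀ᵐ t : ℝ ∂volume, t ∈ Set.uIoc (0:ℝ) 1 →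
      ∀ x ∈ ball z ε, ‖deriv H ((t : ℂ) * x) * (t : ℂ)‖ ≤ C := by
    refine Filter.Eventually.of_forall fun t ht x hx => ?_
    have ht' : t ∈ Set.uIcc (0:ℝ) 1 := Set.uIoc_subset_uIcc ht
    have h1 : |t| ≤ 1 := by
      rw [Set.uIcc_of_le zero_le_one] at ht'
      exact abs_le.mpr ⟨by linarith [ht'.1], ht'.2⟩
    have hmem' := hmem x hx t ht'
    calc ‖deriv H ((t : ℂ) * x) * (t : ℂ)‖
        = ‖deriv H ((t : ℂ) * x)‖ * |t| := by
          rw [norm_mul, Complex.norm_real, Real.norm_eq_abs]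
      _ ≤ C * 1 := mul_le_mul (hC _ hmem') h1 (abs_nonneg t)
          (le_trans (norm_nonneg _) (hC _ hmem'))
      _ = C := mul_one C
  have h_diff : ∀ᵐ t : ℝ ∂volume, t ∈ Set.uIoc (0:ℝ) 1 →
      ∀ x ∈ ball z ε, HasDerivAt (fun x => H ((t : ℂ) * x))
        (deriv H ((t : ℂ) * x) * (t : ℂ)) x := by
    refine Filter.Eventually.of_forall fun t ht x hx => ?_
    have ht' : t ∈ Set.uIcc (0:ℝ) 1 := Set.uIoc_subset_uIcc ht
    have hdH : HasDerivAt H (deriv H ((t : ℂ) * x)) ((t : ℂ) * x) :=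
      (hH.differentiableAt (isOpen_ball.mem_nhds (hK (hmem x hx t ht')))).hasDerivAt
    have hin : HasDerivAt (fun x : ℂ => (t : ℂ) * x) ((t : ℂ)) x := by
      simpa using (hasDerivAt_id x).const_mul ((t : ℂ))
    exact hdH.comp x hin
  have hmain := intervalIntegral.hasDerivAt_integral_of_dominated_loc_of_deriv_le
    (F := fun (x : ℂ) (t : ℝ) => H ((t : ℂ) * x))
    (F' := fun (x : ℂ) (t : ℝ) => deriv H ((t : ℂ) * x) * (t : ℂ))
    (bound := fun _ => C) (ball_mem_nhds z hε) hF_meas hF_int hF'_meas h_bound intervalIntegrable_const h_diff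
  obtain ⟨-, hI⟩ := hmain
  have hF := (hasDerivAt_id z).mul hI
  have hψ : ∀ t ∈ Set.uIcc (0:ℝ) 1,
      HasDerivAt (fun s : ℝ => (s : ℂ) * H ((s : ℂ) * z))
        (1 * H ((t : ℂ) * z) + (t : ℂ) * (deriv H ((t : ℂ) * z) * z)) t := by
    intro t ht
    have hOR : HasDerivAt (fun s : ℝ => (s : ℂ)) 1 t := by
      exact Complex.ofRealCLM.hasDerivAt
    exact hOR.mul (seg_hasDerivAt hH hz ht)
  have hint : IntervalIntegrable (fun t : ℝ =>
      1 * H ((t : ℂ) * z) + (t : ℂ) * (deriv H ((t : ℂ) * z) * z)) volume 0 1 := by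
    apply IntervalIntegrable.add
    · exact (continuousOn_const.mul (seg_cont hHc hz)).intervalIntegrable
    · exact (Complex.continuous_ofReal.continuousOn.mul
        ((seg_cont hH'c hz).mul continuousOn_const)).intervalIntegrable
  have hFTC := intervalIntegral.integral_eq_sub_of_hasDerivAt hψ hint
  have hval : (∫ t in (0:ℝ)..1, H ((t : ℂ) * z))
      + z * ∫ t in (0:ℝ)..1, deriv H ((t : ℂ) * z) * (t : ℂ) = H z := by
    have hi1 : IntervalIntegrable (fun t : ℝ => H ((t : ℂ) * z)) volume 0 1 :=
      (seg_cont hHc hz).intervalIntegrable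
    have hi2 : IntervalIntegrable (fun t : ℝ => deriv H ((t : ℂ) * z) * (t : ℂ)) volume 0 1 :=
      ((seg_cont hH'c hz).mul Complex.continuous_ofReal.continuousOn).intervalIntegrable
    calc (∫ t in (0:ℝ)..1, H ((t : ℂ) * z))
          + z * ∫ t in (0:ℝ)..1, deriv H ((t : ℂ) * z) * (t : ℂ)
        = (∫ t in (0:ℝ)..1, H ((t : ℂ) * z))
          + ∫ t in (0:ℝ)..1, z * (deriv H ((t : ℂ) * z) * (t : ℂ)) := by
          rw [intervalIntegral.integral_const_mul]
      _ = ∫ t in (0:ℝ)..1, (H ((t : ℂ) * z) + z * (deriv H ((t : ℂ) * z) * (t : ℂ))) :=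
          (intervalIntegral.integral_add hi1 (hi2.const_mul z)).symm
      _ = ∫ t in (0:ℝ)..1, (1 * H ((t : ℂ) * z) + (t : ℂ) * (deriv H ((t : ℂ) * z) * z)) := by
          apply intervalIntegral.integral_congr; intro t _
          show H ((t : ℂ) * z) + z * (deriv H ((t : ℂ) * z) * (t : ℂ))
            = 1 * H ((t : ℂ) * z) + (t : ℂ) * (deriv H ((t : ℂ) * z) * z)
          ring
      _ = H z := by rw [hFTC]; simp
  exact hF.congr_deriv (by simp only [one_mul, id]; exact hval)

lemma Tg_hasDerivAt {g h : ℂ → ℂ} (hg : DifferentiableOn ℂ g (ball 0 1))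
    (hh : DifferentiableOn ℂ h (ball 0 1)) {z : ℂ} (hz : z ∈ ball (0:ℂ) 1) :
    HasDerivAt (Tg g h) (h z * deriv g z) z := by
  have hH : DifferentiableOn ℂ (fun w => h w * deriv g w) (ball 0 1) :=
    hh.mul ((hg.analyticOnNhd isOpen_ball).deriv).differentiableOn
  exact hasDerivAt_prim hH hz

lemma Tg_diffOn {g h : ℂ → ℂ} (hg : DifferentiableOn ℂ g (ball 0 1))
    (hh : DifferentiableOn ℂ h (ball 0 1)) :
    DifferentiableOn ℂ (Tg g h) (ball 0 1) := fun z hz =>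
  (Tg_hasDerivAt hg hh hz).differentiableAt.differentiableWithinAt

lemma Tg_deriv {g h : ℂ → ℂ} (hg : DifferentiableOn ℂ g (ball 0 1))
    (hh : DifferentiableOn ℂ h (ball 0 1)) {z : ℂ} (hz : z ∈ ball (0:ℂ) 1) :
    deriv (Tg g h) z = h z * deriv g z :=
  (Tg_hasDerivAt hg hh hz).deriv

lemma Tg_zero (g h : ℂ → ℂ) : Tg g h 0 = 0 := by
  simp [Tg]

lemma Tg_congr {g F G : ℂ → ℂ} (hFG : ∀ w ∈ ball (0:ℂ) 1, F w = G w) {z : ℂ}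
    (hz : z ∈ ball (0:ℂ) 1) : Tg g F z = Tg g G z := by
  unfold Tg
  congr 1
  apply intervalIntegral.integral_congr
  intro t ht
  show F ((t : ℂ) * z) * deriv g ((t : ℂ) * z) = G ((t : ℂ) * z) * deriv g ((t : ℂ) * z)
  rw [hFG _ (mem_seg hz ht)]

lemma Tg_sub_const_mul {g A B : ℂ → ℂ} (hg : DifferentiableOn ℂ g (ball 0 1))
    (hA : ContinuousOn A (ball 0 1)) (hB : ContinuousOn B (ball 0 1)) (c : ℂ) {z : ℂ}
    (hz : z ∈ ball (0:ℂ) 1) :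
    Tg g (fun w => A w - c * B w) z = Tg g A z - c * Tg g B z := by
  have hg'c := deriv_cont hg
  have h1 := seg_integrable hA hg'c hz
  have h2 := seg_integrable hB hg'c hz
  unfold Tg
  calc z * ∫ t in (0:ℝ)..1, (A ((t : ℂ) * z) - c * B ((t : ℂ) * z)) * deriv g ((t : ℂ) * z)
      = z * ∫ t in (0:ℝ)..1, (A ((t : ℂ) * z) * deriv g ((t : ℂ) * z)
          - c * (B ((t : ℂ) * z) * deriv g ((t : ℂ) * z))) := by
        congr 1; apply intervalIntegral.integral_congr; intro t _; ring
    _ = z * ((∫ t in (0:ℝ)..1, A ((t : ℂ) * z) * deriv g ((t : ℂ) * z))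
          - c * ∫ t in (0:ℝ)..1, B ((t : ℂ) * z) * deriv g ((t : ℂ) * z)) := by
        rw [intervalIntegral.integral_sub h1 (h2.const_mul c),
          intervalIntegral.integral_const_mul]
    _ = z * (∫ t in (0:ℝ)..1, A ((t : ℂ) * z) * deriv g ((t : ℂ) * z))
          - c * (z * ∫ t in (0:ℝ)..1, B ((t : ℂ) * z) * deriv g ((t : ℂ) * z)) := by ring

/-- `T_g (M_g h) = S_g (T_g h)` on the ball. -/
lemma key2 {g h : ℂ → ℂ} (hg : DifferentiableOn ℂ g (ball 0 1))
    (hh : DifferentiableOn ℂ h (ball 0 1)) {z : ℂ} (hz : z ∈ ball (0:ℂ) 1) :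
    Tg g (Mg g h) z = Sg g (Tg g h) z := by
  show z * ∫ t in (0:ℝ)..1, Mg g h ((t : ℂ) * z) * deriv g ((t : ℂ) * z)
      = z * ∫ t in (0:ℝ)..1, deriv (Tg g h) ((t : ℂ) * z) * g ((t : ℂ) * z)
  congr 1
  apply intervalIntegral.integral_congr
  intro t ht
  show Mg g h ((t : ℂ) * z) * deriv g ((t : ℂ) * z)
      = deriv (Tg g h) ((t : ℂ) * z) * g ((t : ℂ) * z)
  rw [Tg_deriv hg hh (mem_seg hz ht)]
  show g ((t : ℂ) * z) * h ((t : ℂ) * z) * deriv g ((t : ℂ) * z) = _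
  ring

/-- Commutator identity: for `f` holomorphic with `f 0 = 0`,
`T_g^n S_g f = S_g T_g^n f − n T_g^{n+1} f`. -/
theorem stmt_4 (g f : ℂ → ℂ) (hg : DifferentiableOn ℂ g (Metric.ball 0 1))
    (hf : DifferentiableOn ℂ f (Metric.ball 0 1)) (hf0 : f 0 = 0) (n : ℕ) :
    ∀ z ∈ Metric.ball (0:ℂ) 1,
      (Tg g)^[n] (Sg g f) z = Sg g ((Tg g)^[n] f) z - (n : ℂ) * (Tg g)^[n + 1] f z := by
  have hB : ∀ m : ℕ, DifferentiableOn ℂ ((Tg g)^[m] f) (ball 0 1) ∧ (Tg g)^[m] f 0 = 0 := by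
    intro m
    induction m with
    | zero => exact ⟨hf, hf0⟩
    | succ k ih =>
      rw [Function.iterate_succ_apply']
      exact ⟨Tg_diffOn hg ih.1, Tg_zero g _⟩
  have key : ∀ m : ℕ, ∀ z ∈ ball (0:ℂ) 1,
      (Tg g)^[m] (Sg g f) z
        = g z * (Tg g)^[m] f z - ((m : ℂ) + 1) * Tg g ((Tg g)^[m] f) z := by
    intro m
    induction m with
    | zero =>
      intro z hz
      have h1 := key1 hg hf hz
      simp only [Function.iterate_zero_apply]
      rw [hf0] at h1
      push_cast
      linear_combination h1
    | succ k ih =>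
      intro z hz
      have hdk := (hB k).1
      have h0k1 : Tg g ((Tg g)^[k] f) 0 = 0 := Tg_zero g _
      have hdk1 : DifferentiableOn ℂ (Tg g ((Tg g)^[k] f)) (ball 0 1) := Tg_diffOn hg hdk
      rw [Function.iterate_succ_apply']
      have e1 : Tg g ((Tg g)^[k] (Sg g f)) z
          = Tg g (fun w => Mg g ((Tg g)^[k] f) w
              - ((k : ℂ) + 1) * Tg g ((Tg g)^[k] f) w) z :=
        Tg_congr (fun w hw => ih w hw) hz
      have e2 : Tg g (fun w => Mg g ((Tg g)^[k] f) w
              - ((k : ℂ) + 1) * Tg g ((Tg g)^[k] f) w) z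
          = Tg g (Mg g ((Tg g)^[k] f)) z - ((k : ℂ) + 1) * Tg g (Tg g ((Tg g)^[k] f)) z :=
        Tg_sub_const_mul hg (hg.continuousOn.mul hdk.continuousOn) hdk1.continuousOn _ hz
      have e3 := key2 hg hdk hz
      have e4 := key1 hg hdk1 hz
      rw [h0k1, mul_zero, sub_zero] at e4
      rw [Function.iterate_succ_apply']
      push_cast
      linear_combination e1 + e2 + e3 + e4 - ((k : ℂ) + 2) *
        (rfl : Tg g (Tg g ((Tg g)^[k] f)) z = Tg g (Tg g ((Tg g)^[k] f)) z)
  intro z hz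
  have hk := key n z hz
  have h1 := key1 hg (hB n).1 hz
  rw [(hB n).2, mul_zero, sub_zero] at h1
  rw [Function.iterate_succ_apply']
  linear_combination hk - h1
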